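/- The ℂ-linear span m of {X1, X2, X3, X4} is closed under the matrix commutator (hence is a Lie subalgebra of gl(4,ℂ)), has complex dimension 4, and contains h = span_ℂ{X1, X2, X3} as a proper subspace (X4 ∉ h). -/

import Mathlib

open Matrix

noncomputable section

def X1 (α β : ℂ) : Matrix (Fin 4) (Fin 4) ℂ :=
  !![1,1,0,1; 1,1,0,0; α,β,0,0; 0,0,0,0]

def X2 (α β : ℂ) : Matrix (Fin 4) (Fin 4) ℂ :=
  !![1,1,0,0; 1,1,0,1; β-1,α+1,0,0; 0,0,0,0]

def X3 : Matrix (Fin 4) (Fin 4) ℂ :=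
  !![0,0,0,0; 0,0,0,0; 0,0,0,1; 0,0,0,0]

/-- The ℂ-linear span of {X1, X2, X3}. -/
def h (α β : ℂ) : Submodule ℂ (Matrix (Fin 4) (Fin 4) ℂ) :=
  Submodule.span ℂ {X1 α β, X2 α β, X3}
def X4 (α β : ℂ) : Matrix (Fin 4) (Fin 4) ℂ :=
  !![1,1,0,1/2; 1,1,0,1/2; (α+β)/2,(α+β)/2,0,(α+β)/4; 0,0,0,0]

/-- The ℂ-linear span of {X1, X2, X3, X4}. -/
def m (α β : ℂ) : Submodule ℂ (Matrix (Fin 4) (Fin 4) ℂ) :=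
  Submodule.span ℂ {X1 α β, X2 α β, X3, X4 α β}

lemma b12 (α β : ℂ) : X1 α β * X2 α β - X2 α β * X1 α β = X3 := by
  ext i j
  fin_cases i <;> fin_cases j <;>
    simp [X1, X2, X3, Matrix.mul_apply, Fin.sum_univ_four, Matrix.vecHead, Matrix.vecTail] <;>
    ring_nf

lemma c13 (α β : ℂ) : X1 α β * X3 = X3 * X1 α β := by
  ext i j
  fin_cases i <;> fin_cases j <;>
    simp [X1, X3, Matrix.mul_apply, Fin.sum_univ_four, Matrix.vecHead, Matrix.vecTail]

lemma c14 (α β : ℂ) : X1 α β * X4 α β = X4 α β * X1 α β := by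
  ext i j
  fin_cases i <;> fin_cases j <;>
    simp [X1, X4, Matrix.mul_apply, Fin.sum_univ_four, Matrix.vecHead, Matrix.vecTail] <;>
    ring_nf

lemma c23 (α β : ℂ) : X2 α β * X3 = X3 * X2 α β := by
  ext i j
  fin_cases i <;> fin_cases j <;>
    simp [X2, X3, Matrix.mul_apply, Fin.sum_univ_four, Matrix.vecHead, Matrix.vecTail]

lemma c24 (α β : ℂ) : X2 α β * X4 α β = X4 α β * X2 α β := by
  ext i j
  fin_cases i <;> fin_cases j <;>
    simp [X2, X4, Matrix.mul_apply, Fin.sum_univ_four, Matrix.vecHead, Matrix.vecTail] <;>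
    ring_nf

lemma c34 (α β : ℂ) : X3 * X4 α β = X4 α β * X3 := by
  ext i j
  fin_cases i <;> fin_cases j <;>
    simp [X3, X4, Matrix.mul_apply, Fin.sum_univ_four, Matrix.vecHead, Matrix.vecTail]

/-- m is closed under the commutator, has dimension 4, and contains h properly. -/
theorem m_subalgebra_dim_four (α β : ℂ) (hαβ : α + β ≠ 0) :
    (∀ A ∈ m α β, ∀ B ∈ m α β, ⁅A, B⁆ ∈ m α β) ∧
    Module.finrank ℂ (m α β) = 4 ∧
    h α β ≤ m α β ∧ X4 α β ∉ h α β := by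
  have h3m : X3 ∈ m α β := Submodule.subset_span (by simp)
  have key : ∀ x ∈ ({X1 α β, X2 α β, X3, X4 α β} : Set (Matrix (Fin 4) (Fin 4) ℂ)),
      ∀ y ∈ ({X1 α β, X2 α β, X3, X4 α β} : Set (Matrix (Fin 4) (Fin 4) ℂ)),
      ⁅x, y⁆ ∈ m α β := by
    intro x hx y hy
    simp only [Set.mem_insert_iff, Set.mem_singleton_iff] at hx hy
    rw [Ring.lie_def]
    have z0 : (0 : Matrix (Fin 4) (Fin 4) ℂ) ∈ m α β := zero_mem _
    rcases hx with rfl | rfl | rfl | rfl <;> rcases hy with rfl | rfl | rfl | rfl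
    · rwa [sub_self]
    · rw [b12]; exact h3m
    · rw [c13, sub_self]; exact z0
    · rw [c14, sub_self]; exact z0
    · rw [show X2 α β * X1 α β - X1 α β * X2 α β = -X3 by rw [← b12 α β]; exact (neg_sub _ _).symm]
      exact neg_mem h3m
    · rwa [sub_self]
    · rw [c23, sub_self]; exact z0
    · rw [c24, sub_self]; exact z0
    · rw [← c13, sub_self]; exact z0
    · rw [← c23, sub_self]; exact z0
    · rwa [sub_self]
    · rw [c34, sub_self]; exact z0
    · rw [← c14, sub_self]; exact z0
    · rw [← c24, sub_self]; exact z0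
    · rw [← c34, sub_self]; exact z0
    · rwa [sub_self]
  have key2 : ∀ x ∈ ({X1 α β, X2 α β, X3, X4 α β} : Set (Matrix (Fin 4) (Fin 4) ℂ)),
      ∀ B ∈ m α β, ⁅x, B⁆ ∈ m α β := by
    intro x hx B hB
    induction hB using Submodule.span_induction with
    | mem y hy => exact key x hx y hy
    | zero => simp only [Ring.lie_def, mul_zero, zero_mul, sub_self]; exact zero_mem _
    | add y z _ _ hy hz => rw [Ring.lie_def] at hy hz ⊢; rw [mul_add, add_mul, add_sub_add_comm]; exact add_mem hy hz
    | smul c y _ hy => rw [Ring.lie_def] at hy ⊢; rw [mul_smul_comm, smul_mul_assoc, ← smul_sub]; exact Submodule.smul_mem _ _ hy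
  have closure : ∀ A ∈ m α β, ∀ B ∈ m α β, ⁅A, B⁆ ∈ m α β := by
    intro A hA B hB
    induction hA using Submodule.span_induction with
    | mem x hx => exact key2 x hx B hB
    | zero => simp only [Ring.lie_def, mul_zero, zero_mul, sub_self]; exact zero_mem _
    | add y z _ _ hy hz => rw [Ring.lie_def] at hy hz ⊢; rw [add_mul, mul_add, add_sub_add_comm]; exact add_mem hy hz
    | smul c y _ hy => rw [Ring.lie_def] at hy ⊢; rw [smul_mul_assoc, mul_smul_comm, ← smul_sub]; exact Submodule.smul_mem _ _ hy
  refine ⟨closure, ?_, ?_, ?_⟩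
  · -- dimension 4
    have hrange : Set.range ![X1 α β, X2 α β, X3, X4 α β]
        = ({X1 α β, X2 α β, X3, X4 α β} : Set (Matrix (Fin 4) (Fin 4) ℂ)) := by
      ext x
      simp only [Matrix.range_cons, Matrix.range_empty, Set.union_empty,
        Set.mem_insert_iff, Set.mem_singleton_iff, Set.mem_union]
    have hli : LinearIndependent ℂ ![X1 α β, X2 α β, X3, X4 α β] := by
      rw [Fintype.linearIndependent_iff]
      intro g hg
      rw [Fin.sum_univ_four] at hg
      have e1 := congrFun (congrFun hg 0) 3
      have e2 := congrFun (congrFun hg 1) 3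
      have e3 := congrFun (congrFun hg 2) 0
      have e4 := congrFun (congrFun hg 2) 3
      simp [X1, X2, X3, X4, Matrix.add_apply, Matrix.smul_apply, Matrix.vecHead,
        Matrix.vecTail] at e1 e2 e3 e4
      have hg3 : g 3 = 0 := by linear_combination 2*e3 - 2*α*e1 - 2*(β-1)*e2
      have hg0 : g 0 = 0 := by linear_combination e1 - (1/2)*hg3
      have hg1 : g 1 = 0 := by linear_combination e2 - (1/2)*hg3
      have hg2 : g 2 = 0 := by linear_combination e4 - ((α+β)/4)*hg3
      intro i
      fin_cases i <;> assumption
    have := finrank_span_eq_card hli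
    rw [hrange] at this
    simp at this
    exact this
  · -- h ≤ m
    apply Submodule.span_mono
    intro x hx
    simp only [Set.mem_insert_iff, Set.mem_singleton_iff] at hx ⊢
    tauto
  · -- X4 ∉ h
    intro hmem
    rw [h, Submodule.mem_span_insert] at hmem
    obtain ⟨a, z, hz, hx⟩ := hmem
    rw [Submodule.mem_span_insert] at hz
    obtain ⟨b, w, hw, hz⟩ := hz
    rw [Submodule.mem_span_singleton] at hw
    obtain ⟨c, rfl⟩ := hw
    subst hz
    have e1 := congrFun (congrFun hx 0) 3
    have e2 := congrFun (congrFun hx 1) 3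
    have e3 := congrFun (congrFun hx 2) 0
    simp [X1, X2, X3, X4, Matrix.add_apply, Matrix.smul_apply, Matrix.vecHead,
      Matrix.vecTail] at e1 e2 e3
    exact one_ne_zero (α := ℂ) (by linear_combination 2*e3 - 2*α*e1 - 2*(β-1)*e2)
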